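/- For ζ > ξ > 0, μ, η, P > 0, the secrecy throughput D(E, τ) = τ(log(1 + ζE/τ) − log(1 + ξE/τ)) is jointly concave in (E, τ) on the region E ≥ 0, τ > 0. -/

import Mathlib

open Real

lemma g_concave (ζ ξ : ℝ) (hξ : 0 < ξ) (hζξ : ξ < ζ) :
    ConcaveOn ℝ (Set.Ici 0) (fun x : ℝ => Real.log (1 + ζ * x) - Real.log (1 + ξ * x)) := by
  have hζ : 0 < ζ := hξ.trans hζξ
  have hpos : ∀ c : ℝ, 0 < c → ∀ x : ℝ, 0 ≤ x → 0 < 1 + c * x := by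
    intro c hc x hx; nlinarith [mul_nonneg hc.le hx]
  apply concaveOn_of_hasDerivWithinAt2_nonpos (f' := fun x => ζ / (1 + ζ * x) - ξ / (1 + ξ * x))
    (f'' := fun x => ζ * (-ζ / (1 + ζ * x) ^ 2) - ξ * (-ξ / (1 + ξ * x) ^ 2))
    (convex_Ici 0)
  · apply ContinuousOn.sub
    · exact ((continuousOn_const.add (continuousOn_const.mul continuousOn_id)).log
        (fun x hx => (hpos ζ hζ x hx).ne'))
    · exact ((continuousOn_const.add (continuousOn_const.mul continuousOn_id)).log
        (fun x hx => (hpos ξ hξ x hx).ne'))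
  · intro x hx
    rw [interior_Ici] at hx
    have h1 : (0:ℝ) < 1 + ζ * x := hpos ζ hζ x (le_of_lt hx)
    have h2 : (0:ℝ) < 1 + ξ * x := hpos ξ hξ x (le_of_lt hx)
    have d1 : HasDerivAt (fun y : ℝ => 1 + ζ * y) ζ x := by
      simpa using ((hasDerivAt_id x).const_mul ζ).const_add 1
    have d2 : HasDerivAt (fun y : ℝ => 1 + ξ * y) ξ x := by
      simpa using ((hasDerivAt_id x).const_mul ξ).const_add 1
    exact ((d1.log h1.ne').sub (d2.log h2.ne')).hasDerivWithinAt
  · intro x hx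
    rw [interior_Ici] at hx
    have h1 : (0:ℝ) < 1 + ζ * x := hpos ζ hζ x (le_of_lt hx)
    have h2 : (0:ℝ) < 1 + ξ * x := hpos ξ hξ x (le_of_lt hx)
    have d1 : HasDerivAt (fun y : ℝ => 1 + ζ * y) ζ x := by
      simpa using ((hasDerivAt_id x).const_mul ζ).const_add 1
    have d2 : HasDerivAt (fun y : ℝ => 1 + ξ * y) ξ x := by
      simpa using ((hasDerivAt_id x).const_mul ξ).const_add 1
    have i1 : HasDerivAt (fun y : ℝ => (1 + ζ * y)⁻¹) (-ζ / (1 + ζ * x) ^ 2) x :=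
      d1.inv h1.ne'
    have i2 : HasDerivAt (fun y : ℝ => (1 + ξ * y)⁻¹) (-ξ / (1 + ξ * x) ^ 2) x :=
      d2.inv h2.ne'
    have e1 : HasDerivAt (fun y : ℝ => ζ / (1 + ζ * y)) (ζ * (-ζ / (1 + ζ * x) ^ 2)) x := by
      simpa [div_eq_mul_inv] using i1.const_mul ζ
    have e2 : HasDerivAt (fun y : ℝ => ξ / (1 + ξ * y)) (ξ * (-ξ / (1 + ξ * x) ^ 2)) x := by
      simpa [div_eq_mul_inv] using i2.const_mul ξ
    exact (e1.sub e2).hasDerivWithinAt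
  · intro x hx
    rw [interior_Ici] at hx
    have h1 : (0:ℝ) < 1 + ζ * x := hpos ζ hζ x (le_of_lt hx)
    have h2 : (0:ℝ) < 1 + ξ * x := hpos ξ hξ x (le_of_lt hx)
    have key : ξ ^ 2 / (1 + ξ * x) ^ 2 ≤ ζ ^ 2 / (1 + ζ * x) ^ 2 := by
      rw [div_le_div_iff₀ (by positivity) (by positivity)]
      nlinarith [mul_nonneg (mul_nonneg (mul_nonneg hζ.le hξ.le) hx.le)
        (sub_nonneg.2 hζξ.le), mul_nonneg hζ.le hξ.le, (Set.mem_Ioi.1 hx).le]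
    have : ζ * (-ζ / (1 + ζ * x) ^ 2) = -(ζ ^ 2 / (1 + ζ * x) ^ 2) := by ring
    have h2' : ξ * (-ξ / (1 + ξ * x) ^ 2) = -(ξ ^ 2 / (1 + ξ * x) ^ 2) := by ring
    rw [this, h2']
    linarith

lemma perspective_concave {g : ℝ → ℝ} (hg : ConcaveOn ℝ (Set.Ici 0) g) :
    ConcaveOn ℝ {p : ℝ × ℝ | 0 ≤ p.1 ∧ 0 < p.2}
      (fun p : ℝ × ℝ => p.2 * g (p.1 / p.2)) := by
  constructor
  · exact (convex_Ici (0:ℝ)).prod (convex_Ioi (0:ℝ))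
  · rintro ⟨E1, τ1⟩ ⟨hE1, hτ1⟩ ⟨E2, τ2⟩ ⟨hE2, hτ2⟩ a b ha hb hab
    simp only [Prod.smul_mk, Prod.mk_add_mk, smul_eq_mul]
    have hτ : 0 < a * τ1 + b * τ2 := by
      rcases eq_or_lt_of_le ha with h | h
      · have hb1 : b = 1 := by linarith
        simp [← h, hb1, hτ2]
      · have := mul_pos h hτ1
        nlinarith [mul_nonneg hb hτ2.le]
    set τ := a * τ1 + b * τ2 with hτdef
    have hw1 : 0 ≤ a * τ1 / τ := by positivity
    have hw2 : 0 ≤ b * τ2 / τ := by positivity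
    have hwsum : a * τ1 / τ + b * τ2 / τ = 1 := by
      field_simp
      exact hτdef.symm
    have hx1 : E1 / τ1 ∈ Set.Ici (0:ℝ) := Set.mem_Ici.2 (by positivity)
    have hx2 : E2 / τ2 ∈ Set.Ici (0:ℝ) := Set.mem_Ici.2 (by positivity)
    have hkey := hg.2 hx1 hx2 hw1 hw2 hwsum
    simp only [smul_eq_mul] at hkey
    have harg : a * τ1 / τ * (E1 / τ1) + b * τ2 / τ * (E2 / τ2)
        = (a * E1 + b * E2) / τ := by
      field_simp
    rw [harg] at hkey
    have := mul_le_mul_of_nonneg_left hkey hτ.le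
    calc a * (τ1 * g (E1 / τ1)) + b * (τ2 * g (E2 / τ2))
        = τ * (a * τ1 / τ * g (E1 / τ1) + b * τ2 / τ * g (E2 / τ2)) := by
          field_simp
      _ ≤ τ * g ((a * E1 + b * E2) / τ) := this

theorem secrecy_throughput_jointly_concave (ζ ξ μ η P : ℝ)
    (hξ : 0 < ξ) (hζξ : ξ < ζ) (hμ : 0 < μ) (hη : 0 < η) (hP : 0 < P) :
    ConcaveOn ℝ {p : ℝ × ℝ | 0 ≤ p.1 ∧ 0 < p.2}
      (fun p : ℝ × ℝ =>
        p.2 * Real.log (1 + ζ * p.1 / p.2) - p.2 * Real.log (1 + ξ * p.1 / p.2)) := by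
  have h := perspective_concave (g_concave ζ ξ hξ hζξ)
  have heq : (fun p : ℝ × ℝ =>
      p.2 * Real.log (1 + ζ * p.1 / p.2) - p.2 * Real.log (1 + ξ * p.1 / p.2))
      = fun p : ℝ × ℝ => p.2 *
        ((fun x : ℝ => Real.log (1 + ζ * x) - Real.log (1 + ξ * x)) (p.1 / p.2)) := by
    funext p
    simp only []
    rw [mul_sub, mul_div_assoc ζ, mul_div_assoc ξ]
  rw [heq]
  exact h
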